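/- In any dagger compact category, for morphisms f, g : I → A, the equality (f_* ⊗ f)(f_* ⊗ f)† = (g_* ⊗ g)(g_* ⊗ g)† of morphisms A* ⊗ A → A* ⊗ A is equivalent to (f ⊗ f)(f ⊗ f)† = (g ⊗ g)(g ⊗ g)†. -/

import Mathlib

open CategoryTheory MonoidalCategory

universe v u

/-- A dagger structure on a category. -/
class Dagger (C : Type u) [Category.{v} C] where
  dag : ∀ {X Y : C}, (X ⟶ Y) → (Y ⟶ X)
  dag_dag : ∀ {X Y : C} (f : X ⟶ Y), dag (dag f) = f
  dag_id : ∀ X : C, dag (𝟙 X) = 𝟙 X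
  dag_comp : ∀ {X Y Z : C} (f : X ⟶ Y) (g : Y ⟶ Z), dag (f ≫ g) = dag g ≫ dag f

open Dagger

/-- A dagger symmetric monoidal category. -/
class DaggerSMC (C : Type u) [Category.{v} C] [MonoidalCategory C] [SymmetricCategory C]
    extends Dagger C where
  dag_tensor : ∀ {X Y X' Y' : C} (f : X ⟶ Y) (g : X' ⟶ Y'), dag (f ⊗ₘ g) = dag f ⊗ₘ dag g
  dag_assoc : ∀ X Y Z : C, dag (α_ X Y Z).hom = (α_ X Y Z).inv
  dag_left : ∀ X : C, dag (λ_ X).hom = (λ_ X).inv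
  dag_right : ∀ X : C, dag (ρ_ X).hom = (ρ_ X).inv
  dag_braid : ∀ X Y : C, dag (β_ X Y).hom = (β_ X Y).inv

variable {C : Type u} [Category.{v} C] [MonoidalCategory C] [SymmetricCategory C] [DaggerSMC C]

set_option linter.unusedSectionVars false

theorem dag_inj {X Y : C} {f g : X ⟶ Y} (h : dag f = dag g) : f = g := by
  rw [← dag_dag f, h, dag_dag]

theorem dag_whiskerRight {X Y : C} (f : X ⟶ Y) (Z : C) : dag (f ▷ Z) = dag f ▷ Z := by
  rw [← tensorHom_id, ← tensorHom_id, DaggerSMC.dag_tensor, dag_id]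

theorem dag_whiskerLeft (Z : C) {X Y : C} (f : X ⟶ Y) : dag (Z ◁ f) = Z ◁ dag f := by
  rw [← id_tensorHom, ← id_tensorHom, DaggerSMC.dag_tensor, dag_id]

theorem dag_isIso {X Y : C} (f : X ⟶ Y) [IsIso f] : IsIso (dag f) :=
  ⟨dag (inv f), ⟨by rw [← dag_comp, IsIso.inv_hom_id, dag_id], by rw [← dag_comp, IsIso.hom_inv_id, dag_id]⟩⟩

/-- scalar insertion -/
theorem stateScalar {X : C} (s : X ⟶ 𝟙_ C) (Θ : 𝟙_ C ⟶ 𝟙_ C) (t : 𝟙_ C ⟶ X) :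
    s ≫ Θ ≫ t = (s ≫ t) ≫ ((ρ_ X).inv ≫ (X ◁ Θ) ≫ (ρ_ X).hom) := by
  have h1 : t ≫ (ρ_ X).inv = (ρ_ (𝟙_ C)).inv ≫ (t ▷ 𝟙_ C) := by
    rw [← cancel_mono (ρ_ X).hom]
    simp
  slice_rhs 2 3 => rw [h1]
  slice_rhs 3 4 => rw [← whisker_exchange]
  have h2 : (𝟙_ C) ◁ Θ = (λ_ (𝟙_ C)).hom ≫ Θ ≫ (λ_ (𝟙_ C)).inv := by simp
  rw [h2]
  monoidal


section Generic
variable {A : C} [ia : HasRightDual A] [iu : HasRightDual (𝟙_ C)]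

def uu : 𝟙_ C ⟶ (𝟙_ C)ᘁ := η_ (𝟙_ C) ((𝟙_ C)ᘁ) ≫ (λ_ ((𝟙_ C)ᘁ)).hom
def vv : ((𝟙_ C)ᘁ : C) ⟶ 𝟙_ C := (ρ_ ((𝟙_ C)ᘁ)).inv ≫ ε_ (𝟙_ C) ((𝟙_ C)ᘁ)

theorem uu_vv : (uu : 𝟙_ C ⟶ _) ≫ vv = 𝟙 _ := by
  calc uu ≫ vv
      = (λ_ (𝟙_ C)).inv ≫
          (η_ (𝟙_ C) ((𝟙_ C)ᘁ) ▷ (𝟙_ C) ≫ (α_ (𝟙_ C) ((𝟙_ C)ᘁ) (𝟙_ C)).hom ≫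
            (𝟙_ C) ◁ ε_ (𝟙_ C) ((𝟙_ C)ᘁ)) ≫ (ρ_ (𝟙_ C)).hom := by
        rw [uu, vv]; monoidal
    _ = (λ_ (𝟙_ C)).inv ≫ ((λ_ (𝟙_ C)).hom ≫ (ρ_ (𝟙_ C)).inv) ≫ (ρ_ (𝟙_ C)).hom := by
        rw [ExactPairing.evaluation_coevaluation]
    _ = 𝟙 _ := by monoidal

theorem vv_uu : (vv : _ ⟶ 𝟙_ C) ≫ uu = 𝟙 _ := by
  calc vv ≫ uu
      = 𝟙 _ ⊗≫ (ε_ (𝟙_ C) ((𝟙_ C)ᘁ) ▷ (𝟙_ C) ≫ (𝟙_ C) ◁ η_ (𝟙_ C) ((𝟙_ C)ᘁ)) ⊗≫ 𝟙 _ := by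
        rw [vv, uu]; monoidal
    _ = 𝟙 _ ⊗≫ ((((𝟙_ C)ᘁ ⊗ 𝟙_ C : C)) ◁ η_ (𝟙_ C) ((𝟙_ C)ᘁ) ≫
          ε_ (𝟙_ C) ((𝟙_ C)ᘁ) ▷ ((𝟙_ C ⊗ (𝟙_ C)ᘁ : C))) ⊗≫ 𝟙 _ := by
        rw [← whisker_exchange]
    _ = 𝟙 _ ⊗≫ (((𝟙_ C)ᘁ : C) ◁ η_ (𝟙_ C) ((𝟙_ C)ᘁ) ≫
          (α_ ((𝟙_ C)ᘁ : C) (𝟙_ C) ((𝟙_ C)ᘁ : C)).inv ≫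
          ε_ (𝟙_ C) ((𝟙_ C)ᘁ) ▷ ((𝟙_ C)ᘁ : C)) ⊗≫ 𝟙 _ := by
        monoidal
    _ = 𝟙 _ ⊗≫ ((ρ_ ((𝟙_ C)ᘁ : C)).hom ≫ (λ_ ((𝟙_ C)ᘁ : C)).inv) ⊗≫ 𝟙 _ := by
        rw [ExactPairing.coevaluation_evaluation]
    _ = 𝟙 _ := by monoidal

instance : IsIso (vv : ((𝟙_ C)ᘁ : C) ⟶ 𝟙_ C) := ⟨uu, vv_uu, uu_vv⟩
instance : IsIso (uu : 𝟙_ C ⟶ ((𝟙_ C)ᘁ : C)) := ⟨vv, uu_vv, vv_uu⟩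

instance isIso_evalUnit : IsIso (ε_ (𝟙_ C) ((𝟙_ C)ᘁ)) := by
  have : ε_ (𝟙_ C) ((𝟙_ C)ᘁ) = (ρ_ ((𝟙_ C)ᘁ)).hom ≫ vv := by simp [vv]
  rw [this]; infer_instance

instance isIso_coevalUnit : IsIso (η_ (𝟙_ C) ((𝟙_ C)ᘁ)) := by
  have : η_ (𝟙_ C) ((𝟙_ C)ᘁ) = uu ≫ (λ_ (((𝟙_ C)ᘁ : C))).inv := by simp [uu]
  rw [this]; infer_instance


def Fop (x : ((Aᘁ : C) ⊗ A) ⟶ ((Aᘁ : C) ⊗ A)) : A ⊗ A ⟶ A ⊗ A :=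
  A ◁ (λ_ A).inv ≫
  A ◁ ((dag (ε_ A Aᘁ) ≫ (β_ Aᘁ A).hom) ▷ A) ≫
  A ◁ (α_ A Aᘁ A).hom ≫
  A ◁ (A ◁ x) ≫
  (α_ A A ((Aᘁ : C) ⊗ A)).inv ≫
  ((β_ A A).hom ▷ ((Aᘁ : C) ⊗ A)) ≫
  (α_ A A ((Aᘁ : C) ⊗ A)).hom ≫
  A ◁ (α_ A Aᘁ A).inv ≫
  A ◁ (((β_ A Aᘁ).hom ≫ ε_ A Aᘁ) ▷ A) ≫
  A ◁ (λ_ A).hom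

def cup1 : 𝟙_ C ⟶ 𝟙_ C ⊗ ((𝟙_ C)ᘁ : C) :=
  dag (ε_ (𝟙_ C) ((𝟙_ C)ᘁ)) ≫ (β_ ((𝟙_ C)ᘁ) (𝟙_ C)).hom

def cap1 : 𝟙_ C ⊗ ((𝟙_ C)ᘁ : C) ⟶ 𝟙_ C :=
  (β_ (𝟙_ C) ((𝟙_ C)ᘁ)).hom ≫ ε_ (𝟙_ C) ((𝟙_ C)ᘁ)

theorem keyF_step1 (p : (Aᘁ : C) ⟶ (𝟙_ C)ᘁ) (q : ((𝟙_ C)ᘁ : C) ⟶ Aᘁ)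
    (s : A ⟶ 𝟙_ C) (t : 𝟙_ C ⟶ A)
    (Hp : dag (ε_ A Aᘁ) ≫ (p ▷ A) = dag (ε_ (𝟙_ C) ((𝟙_ C)ᘁ)) ≫ (((𝟙_ C)ᘁ) ◁ t))
    (Hq : (q ▷ A) ≫ ε_ A Aᘁ = (((𝟙_ C)ᘁ) ◁ s) ≫ ε_ (𝟙_ C) ((𝟙_ C)ᘁ)) :
    Fop ((p ≫ q) ⊗ₘ (s ≫ t)) =
      A ◁ (λ_ A).inv ≫
      A ◁ ((cup1 ≫ (t ▷ ((𝟙_ C)ᘁ : C))) ▷ A) ≫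
      A ◁ (α_ A ((𝟙_ C)ᘁ : C) A).hom ≫
      (α_ A A (((𝟙_ C)ᘁ : C) ⊗ A)).inv ≫
      ((β_ A A).hom ▷ (((𝟙_ C)ᘁ : C) ⊗ A)) ≫
      (α_ A A (((𝟙_ C)ᘁ : C) ⊗ A)).hom ≫
      A ◁ (A ◁ (((𝟙_ C)ᘁ : C) ◁ (s ≫ t))) ≫
      A ◁ (α_ A ((𝟙_ C)ᘁ : C) A).inv ≫
      A ◁ ((((s ▷ ((𝟙_ C)ᘁ : C)) ≫ cap1) ▷ A)) ≫
      A ◁ (λ_ A).hom := by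
  have hy : (p ≫ q) ⊗ₘ (s ≫ t) =
      (p ▷ A) ≫ (((𝟙_ C)ᘁ : C) ◁ (s ≫ t)) ≫ (q ▷ A) := by
    rw [MonoidalCategory.tensorHom_def, comp_whiskerRight, Category.assoc, ← whisker_exchange]
  have hA : ((dag (ε_ A Aᘁ) ≫ (β_ Aᘁ A).hom) ▷ A) ≫ (α_ A Aᘁ A).hom ≫ A ◁ (p ▷ A)
      = ((cup1 ≫ (t ▷ ((𝟙_ C)ᘁ : C))) ▷ A) ≫ (α_ A ((𝟙_ C)ᘁ : C) A).hom := by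
    simp only [comp_whiskerRight, Category.assoc]
    slice_lhs 3 4 => rw [← associator_naturality_middle]
    slice_lhs 2 3 => rw [← comp_whiskerRight, ← BraidedCategory.braiding_naturality_left p A,
      comp_whiskerRight]
    slice_lhs 1 2 => rw [← comp_whiskerRight, Hp, comp_whiskerRight]
    slice_lhs 2 3 => rw [← comp_whiskerRight,
      BraidedCategory.braiding_naturality_right ((𝟙_ C)ᘁ : C) t, comp_whiskerRight]
    simp only [cup1, comp_whiskerRight, Category.assoc]
  have hB : (A ◁ (q ▷ A)) ≫ (α_ A Aᘁ A).inv ≫ (((β_ A Aᘁ).hom ≫ ε_ A Aᘁ) ▷ A)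
      = (α_ A ((𝟙_ C)ᘁ : C) A).inv ≫ ((((s ▷ ((𝟙_ C)ᘁ : C)) ≫ cap1)) ▷ A) := by
    simp only [comp_whiskerRight, Category.assoc]
    slice_lhs 1 2 => rw [associator_inv_naturality_middle]
    slice_lhs 2 3 => rw [← comp_whiskerRight, BraidedCategory.braiding_naturality_right A q,
      comp_whiskerRight]
    slice_lhs 3 4 => rw [← comp_whiskerRight, Hq, comp_whiskerRight]
    slice_lhs 2 3 => rw [← comp_whiskerRight, ← BraidedCategory.braiding_naturality_left s ((𝟙_ C)ᘁ : C),
      comp_whiskerRight]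
    simp only [cap1, comp_whiskerRight, Category.assoc]
  have hM : ∀ {R R' : C} (w : R ⟶ R'),
      A ◁ (A ◁ w) ≫ (α_ A A R').inv ≫ ((β_ A A).hom ▷ R') ≫ (α_ A A R').hom
      = (α_ A A R).inv ≫ ((β_ A A).hom ▷ R) ≫ (α_ A A R).hom ≫ A ◁ (A ◁ w) := by
    intro R R' w
    slice_lhs 1 2 => rw [associator_inv_naturality_right]
    slice_lhs 2 3 => rw [whisker_exchange]
    slice_lhs 3 4 => rw [associator_naturality_right]
  rw [Fop, hy]
  simp only [MonoidalCategory.whiskerLeft_comp, Category.assoc]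
  -- head
  slice_lhs 2 4 => rw [← MonoidalCategory.whiskerLeft_comp, ← MonoidalCategory.whiskerLeft_comp,
    hA, MonoidalCategory.whiskerLeft_comp]
  simp only [Category.assoc]
  slice_lhs 6 9 => rw [hM]
  slice_lhs 5 8 => rw [hM]
  slice_lhs 4 7 => rw [hM]
  slice_lhs 9 11 => rw [← MonoidalCategory.whiskerLeft_comp, ← MonoidalCategory.whiskerLeft_comp,
    hB, MonoidalCategory.whiskerLeft_comp]
  simp only [MonoidalCategory.whiskerLeft_comp, comp_whiskerRight, Category.assoc]

def ThF : 𝟙_ C ⟶ 𝟙_ C := cup1 ≫ cap1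

theorem keyF (p : (Aᘁ : C) ⟶ (𝟙_ C)ᘁ) (q : ((𝟙_ C)ᘁ : C) ⟶ Aᘁ)
    (s : A ⟶ 𝟙_ C) (t : 𝟙_ C ⟶ A)
    (Hp : dag (ε_ A Aᘁ) ≫ (p ▷ A) = dag (ε_ (𝟙_ C) ((𝟙_ C)ᘁ)) ≫ (((𝟙_ C)ᘁ) ◁ t))
    (Hq : (q ▷ A) ≫ ε_ A Aᘁ = (((𝟙_ C)ᘁ) ◁ s) ≫ ε_ (𝟙_ C) ((𝟙_ C)ᘁ)) :
    Fop ((p ≫ q) ⊗ₘ (s ≫ t)) = (s ≫ ThF ≫ t) ⊗ₘ (s ≫ t) := by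
  rw [keyF_step1 p q s t Hp Hq]
  simp only [MonoidalCategory.whiskerLeft_comp, comp_whiskerRight, Category.assoc]
  -- M1
  slice_lhs 3 4 => rw [← MonoidalCategory.whiskerLeft_comp, associator_naturality_left,
    MonoidalCategory.whiskerLeft_comp]
  -- M2
  slice_lhs 4 5 => rw [associator_inv_naturality_middle]
  -- M3
  slice_lhs 5 6 => rw [← comp_whiskerRight, BraidedCategory.braiding_naturality_right A t,
    comp_whiskerRight]
  -- M4
  slice_lhs 6 7 => rw [associator_naturality_left]
  simp only [Category.assoc]
  -- M5: slide t to the right (six exchanges)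
  slice_lhs 7 8 => rw [← whisker_exchange]
  slice_lhs 8 9 => rw [← whisker_exchange]
  slice_lhs 9 10 => rw [← whisker_exchange]
  slice_lhs 10 11 => rw [← whisker_exchange]
  slice_lhs 11 12 => rw [← whisker_exchange]
  slice_lhs 12 13 => rw [← whisker_exchange]
  -- M7: b-chain past associator
  slice_lhs 8 9 => rw [← MonoidalCategory.whiskerLeft_comp, associator_inv_naturality_right,
    MonoidalCategory.whiskerLeft_comp]
  slice_lhs 7 8 => rw [← MonoidalCategory.whiskerLeft_comp, associator_inv_naturality_right,
    MonoidalCategory.whiskerLeft_comp]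
  -- M8: b-chain past s_a and cap1
  slice_lhs 9 10 => rw [← MonoidalCategory.whiskerLeft_comp, whisker_exchange,
    MonoidalCategory.whiskerLeft_comp]
  slice_lhs 8 9 => rw [← MonoidalCategory.whiskerLeft_comp, whisker_exchange,
    MonoidalCategory.whiskerLeft_comp]
  slice_lhs 10 11 => rw [← MonoidalCategory.whiskerLeft_comp, whisker_exchange,
    MonoidalCategory.whiskerLeft_comp]
  slice_lhs 9 10 => rw [← MonoidalCategory.whiskerLeft_comp, whisker_exchange,
    MonoidalCategory.whiskerLeft_comp]
  simp only [Category.assoc]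
  -- unitor naturality for b-chain
  slice_lhs 11 12 => rw [← MonoidalCategory.whiskerLeft_comp, leftUnitor_naturality,
    MonoidalCategory.whiskerLeft_comp]
  slice_lhs 10 11 => rw [← MonoidalCategory.whiskerLeft_comp, leftUnitor_naturality,
    MonoidalCategory.whiskerLeft_comp]
  -- M9: s_a back through associator
  slice_lhs 7 8 => rw [← MonoidalCategory.whiskerLeft_comp, ← associator_inv_naturality_left,
    MonoidalCategory.whiskerLeft_comp]
  -- M10: s_a back through the braiding block
  slice_lhs 6 7 => rw [← associator_naturality_middle]
  slice_lhs 5 6 => rw [← comp_whiskerRight, ← BraidedCategory.braiding_naturality_left s (𝟙_ C),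
    comp_whiskerRight]
  slice_lhs 4 5 => rw [← associator_inv_naturality_left]
  slice_lhs 3 4 => rw [whisker_exchange]
  slice_lhs 2 3 => rw [whisker_exchange]
  slice_lhs 1 2 => rw [whisker_exchange]
  simp only [Category.assoc]
  -- move b-chain past t ▷ A
  slice_lhs 12 13 => rw [whisker_exchange]
  slice_lhs 11 12 => rw [whisker_exchange]
  rw [MonoidalCategory.tensorHom_def]
  simp only [ThF, cup1, cap1, braiding_tensorUnit_right, braiding_tensorUnit_left,
    comp_whiskerRight, MonoidalCategory.whiskerLeft_comp, Category.assoc]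
  monoidal

def Gop (x : A ⊗ A ⟶ A ⊗ A) : ((Aᘁ : C) ⊗ A) ⟶ ((Aᘁ : C) ⊗ A) :=
  Aᘁ ◁ (λ_ A).inv ≫
  Aᘁ ◁ ((η_ A Aᘁ ≫ (β_ A Aᘁ).hom) ▷ A) ≫
  Aᘁ ◁ (α_ Aᘁ A A).hom ≫
  Aᘁ ◁ (Aᘁ ◁ x) ≫
  (α_ Aᘁ Aᘁ (A ⊗ A)).inv ≫
  ((β_ Aᘁ Aᘁ).hom ▷ (A ⊗ A)) ≫
  (α_ Aᘁ Aᘁ (A ⊗ A)).hom ≫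
  Aᘁ ◁ (α_ Aᘁ A A).inv ≫
  Aᘁ ◁ (((β_ Aᘁ A).hom ≫ dag (η_ A Aᘁ)) ▷ A) ≫
  Aᘁ ◁ (λ_ A).hom

def cup2 : 𝟙_ C ⟶ ((𝟙_ C)ᘁ : C) ⊗ 𝟙_ C :=
  η_ (𝟙_ C) ((𝟙_ C)ᘁ) ≫ (β_ (𝟙_ C) ((𝟙_ C)ᘁ)).hom

def cap2 : ((𝟙_ C)ᘁ : C) ⊗ 𝟙_ C ⟶ 𝟙_ C :=
  (β_ ((𝟙_ C)ᘁ) (𝟙_ C)).hom ≫ dag (η_ (𝟙_ C) ((𝟙_ C)ᘁ))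

def XiG : ((𝟙_ C)ᘁ : C) ⟶ ((𝟙_ C)ᘁ : C) :=
  (ρ_ ((𝟙_ C)ᘁ : C)).inv ≫ (((𝟙_ C)ᘁ : C) ◁ cup2) ≫
    (α_ ((𝟙_ C)ᘁ : C) ((𝟙_ C)ᘁ : C) (𝟙_ C)).inv ≫
    ((β_ ((𝟙_ C)ᘁ) ((𝟙_ C)ᘁ)).hom ▷ (𝟙_ C)) ≫
    (α_ ((𝟙_ C)ᘁ : C) ((𝟙_ C)ᘁ : C) (𝟙_ C)).hom ≫
    (((𝟙_ C)ᘁ : C) ◁ cap2) ≫ (ρ_ ((𝟙_ C)ᘁ : C)).hom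

theorem keyG_step1 (p : (Aᘁ : C) ⟶ (𝟙_ C)ᘁ) (q : ((𝟙_ C)ᘁ : C) ⟶ Aᘁ)
    (s : A ⟶ 𝟙_ C) (t : 𝟙_ C ⟶ A)
    (Hq' : η_ (𝟙_ C) ((𝟙_ C)ᘁ) ≫ ((𝟙_ C) ◁ q) = η_ A Aᘁ ≫ (s ▷ Aᘁ))
    (Hp' : (t ▷ (Aᘁ : C)) ≫ dag (η_ A Aᘁ) = ((𝟙_ C) ◁ p) ≫ dag (η_ (𝟙_ C) ((𝟙_ C)ᘁ))) :
    Gop ((s ≫ t) ⊗ₘ (s ≫ t)) =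
      Aᘁ ◁ (λ_ A).inv ≫
      Aᘁ ◁ ((cup2 ≫ (q ▷ (𝟙_ C))) ▷ A) ≫
      Aᘁ ◁ (α_ (Aᘁ : C) (𝟙_ C) A).hom ≫
      (α_ (Aᘁ : C) (Aᘁ : C) ((𝟙_ C) ⊗ A)).inv ≫
      ((β_ Aᘁ Aᘁ).hom ▷ ((𝟙_ C) ⊗ A)) ≫
      (α_ (Aᘁ : C) (Aᘁ : C) ((𝟙_ C) ⊗ A)).hom ≫
      Aᘁ ◁ ((Aᘁ : C) ◁ ((𝟙_ C) ◁ (s ≫ t))) ≫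
      Aᘁ ◁ (α_ (Aᘁ : C) (𝟙_ C) A).inv ≫
      Aᘁ ◁ ((((p ▷ (𝟙_ C)) ≫ cap2) ▷ A)) ≫
      Aᘁ ◁ (λ_ A).hom := by
  have hy : (s ≫ t) ⊗ₘ (s ≫ t) =
      (s ▷ A) ≫ ((𝟙_ C) ◁ (s ≫ t)) ≫ (t ▷ A) := by
    rw [MonoidalCategory.tensorHom_def, comp_whiskerRight, Category.assoc, ← whisker_exchange]
  have hA : ((η_ A Aᘁ ≫ (β_ A Aᘁ).hom) ▷ A) ≫ (α_ Aᘁ A A).hom ≫ (Aᘁ : C) ◁ (s ▷ A)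
      = ((cup2 ≫ (q ▷ (𝟙_ C))) ▷ A) ≫ (α_ (Aᘁ : C) (𝟙_ C) A).hom := by
    simp only [comp_whiskerRight, Category.assoc]
    slice_lhs 3 4 => rw [← associator_naturality_middle]
    slice_lhs 2 3 => rw [← comp_whiskerRight, ← BraidedCategory.braiding_naturality_left s (Aᘁ : C),
      comp_whiskerRight]
    slice_lhs 1 2 => rw [← comp_whiskerRight, ← Hq', comp_whiskerRight]
    slice_lhs 2 3 => rw [← comp_whiskerRight,
      BraidedCategory.braiding_naturality_right (𝟙_ C) q, comp_whiskerRight]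
    simp only [cup2, comp_whiskerRight, Category.assoc]
  have hB : ((Aᘁ : C) ◁ (t ▷ A)) ≫ (α_ Aᘁ A A).inv ≫ (((β_ Aᘁ A).hom ≫ dag (η_ A Aᘁ)) ▷ A)
      = (α_ (Aᘁ : C) (𝟙_ C) A).inv ≫ ((((p ▷ (𝟙_ C)) ≫ cap2)) ▷ A) := by
    simp only [comp_whiskerRight, Category.assoc]
    slice_lhs 1 2 => rw [associator_inv_naturality_middle]
    slice_lhs 2 3 => rw [← comp_whiskerRight, BraidedCategory.braiding_naturality_right (Aᘁ : C) t,
      comp_whiskerRight]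
    slice_lhs 3 4 => rw [← comp_whiskerRight, Hp', comp_whiskerRight]
    slice_lhs 2 3 => rw [← comp_whiskerRight, ← BraidedCategory.braiding_naturality_left p (𝟙_ C),
      comp_whiskerRight]
    simp only [cap2, comp_whiskerRight, Category.assoc]
  have hM : ∀ {R R' : C} (w : R ⟶ R'),
      (Aᘁ : C) ◁ ((Aᘁ : C) ◁ w) ≫ (α_ (Aᘁ : C) (Aᘁ : C) R').inv ≫
        ((β_ Aᘁ Aᘁ).hom ▷ R') ≫ (α_ (Aᘁ : C) (Aᘁ : C) R').hom
      = (α_ (Aᘁ : C) (Aᘁ : C) R).inv ≫ ((β_ Aᘁ Aᘁ).hom ▷ R) ≫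
        (α_ (Aᘁ : C) (Aᘁ : C) R).hom ≫ (Aᘁ : C) ◁ ((Aᘁ : C) ◁ w) := by
    intro R R' w
    slice_lhs 1 2 => rw [associator_inv_naturality_right]
    slice_lhs 2 3 => rw [whisker_exchange]
    slice_lhs 3 4 => rw [associator_naturality_right]
  rw [Gop, hy]
  simp only [MonoidalCategory.whiskerLeft_comp, Category.assoc]
  slice_lhs 2 4 => rw [← MonoidalCategory.whiskerLeft_comp, ← MonoidalCategory.whiskerLeft_comp,
    hA, MonoidalCategory.whiskerLeft_comp]
  simp only [Category.assoc]
  slice_lhs 6 9 => rw [hM]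
  slice_lhs 5 8 => rw [hM]
  slice_lhs 4 7 => rw [hM]
  slice_lhs 9 11 => rw [← MonoidalCategory.whiskerLeft_comp, ← MonoidalCategory.whiskerLeft_comp,
    hB, MonoidalCategory.whiskerLeft_comp]
  simp only [MonoidalCategory.whiskerLeft_comp, comp_whiskerRight, Category.assoc]

theorem keyG (p : (Aᘁ : C) ⟶ (𝟙_ C)ᘁ) (q : ((𝟙_ C)ᘁ : C) ⟶ Aᘁ)
    (s : A ⟶ 𝟙_ C) (t : 𝟙_ C ⟶ A)
    (Hq' : η_ (𝟙_ C) ((𝟙_ C)ᘁ) ≫ ((𝟙_ C) ◁ q) = η_ A Aᘁ ≫ (s ▷ Aᘁ))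
    (Hp' : (t ▷ (Aᘁ : C)) ≫ dag (η_ A Aᘁ) = ((𝟙_ C) ◁ p) ≫ dag (η_ (𝟙_ C) ((𝟙_ C)ᘁ))) :
    Gop ((s ≫ t) ⊗ₘ (s ≫ t)) = (p ≫ XiG ≫ q) ⊗ₘ (s ≫ t) := by
  rw [keyG_step1 p q s t Hq' Hp']
  simp only [MonoidalCategory.whiskerLeft_comp, comp_whiskerRight, Category.assoc]
  -- M1
  slice_lhs 3 4 => rw [← MonoidalCategory.whiskerLeft_comp, associator_naturality_left,
    MonoidalCategory.whiskerLeft_comp]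
  -- M2
  slice_lhs 4 5 => rw [associator_inv_naturality_middle]
  -- M3
  slice_lhs 5 6 => rw [← comp_whiskerRight, BraidedCategory.braiding_naturality_right (Aᘁ : C) q,
    comp_whiskerRight]
  -- M4
  slice_lhs 6 7 => rw [associator_naturality_left]
  simp only [Category.assoc]
  -- M5: slide q to the right (six exchanges)
  slice_lhs 7 8 => rw [← whisker_exchange]
  slice_lhs 8 9 => rw [← whisker_exchange]
  slice_lhs 9 10 => rw [← whisker_exchange]
  slice_lhs 10 11 => rw [← whisker_exchange]
  slice_lhs 11 12 => rw [← whisker_exchange]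
  slice_lhs 12 13 => rw [← whisker_exchange]
  -- M7: b-chain past associator
  slice_lhs 8 9 => rw [← MonoidalCategory.whiskerLeft_comp, associator_inv_naturality_right,
    MonoidalCategory.whiskerLeft_comp]
  slice_lhs 7 8 => rw [← MonoidalCategory.whiskerLeft_comp, associator_inv_naturality_right,
    MonoidalCategory.whiskerLeft_comp]
  -- M8: b-chain past p and cap2
  slice_lhs 9 10 => rw [← MonoidalCategory.whiskerLeft_comp, whisker_exchange,
    MonoidalCategory.whiskerLeft_comp]
  slice_lhs 8 9 => rw [← MonoidalCategory.whiskerLeft_comp, whisker_exchange,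
    MonoidalCategory.whiskerLeft_comp]
  slice_lhs 10 11 => rw [← MonoidalCategory.whiskerLeft_comp, whisker_exchange,
    MonoidalCategory.whiskerLeft_comp]
  slice_lhs 9 10 => rw [← MonoidalCategory.whiskerLeft_comp, whisker_exchange,
    MonoidalCategory.whiskerLeft_comp]
  simp only [Category.assoc]
  slice_lhs 11 12 => rw [← MonoidalCategory.whiskerLeft_comp, leftUnitor_naturality,
    MonoidalCategory.whiskerLeft_comp]
  slice_lhs 10 11 => rw [← MonoidalCategory.whiskerLeft_comp, leftUnitor_naturality,
    MonoidalCategory.whiskerLeft_comp]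
  -- M9
  slice_lhs 7 8 => rw [← MonoidalCategory.whiskerLeft_comp, ← associator_inv_naturality_left,
    MonoidalCategory.whiskerLeft_comp]
  -- M10
  slice_lhs 6 7 => rw [← associator_naturality_middle]
  slice_lhs 5 6 => rw [← comp_whiskerRight, ← BraidedCategory.braiding_naturality_left p ((𝟙_ C)ᘁ : C),
    comp_whiskerRight]
  slice_lhs 4 5 => rw [← associator_inv_naturality_left]
  slice_lhs 3 4 => rw [whisker_exchange]
  slice_lhs 2 3 => rw [whisker_exchange]
  slice_lhs 1 2 => rw [whisker_exchange]
  simp only [Category.assoc]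
  slice_lhs 12 13 => rw [whisker_exchange]
  slice_lhs 11 12 => rw [whisker_exchange]
  rw [MonoidalCategory.tensorHom_def]
  simp only [XiG, cup2, cap2, braiding_tensorUnit_right, braiding_tensorUnit_left,
    comp_whiskerRight, MonoidalCategory.whiskerLeft_comp, Category.assoc]
  monoidal

end Generic

/-- The CP-form `(f† ⊗ id)(id ⊗ σ)(f ⊗ id)` of a Kraus morphism `f : A ⟶ X ⊗ B`
(ancillary system `X`), written with coherence isomorphisms inserted. -/
def CPform {A B X : C} (f : A ⟶ X ⊗ B) : A ⊗ B ⟶ A ⊗ B :=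
  (f ▷ B) ≫ (α_ X B B).hom ≫ (X ◁ (β_ B B).hom) ≫ (α_ X B B).inv ≫ (dag f ▷ B)

/-- The composition in `CP(C)` of the CP-form of `f : A ⟶ X ⊗ B` with the CP-form of
`g : B ⟶ D ⊗ E`, given by the composition diagram of the CP-construction. -/
def CPcomp {A B X D E : C} (f : A ⟶ X ⊗ B) (g : B ⟶ D ⊗ E) : A ⊗ E ⟶ A ⊗ E :=
  (f ▷ E) ≫ (α_ X B E).hom ≫ (X ◁ (g ▷ E)) ≫ (X ◁ (α_ D E E).hom) ≫
    (X ◁ (D ◁ (β_ E E).hom)) ≫ (X ◁ (α_ D E E).inv) ≫ (X ◁ (dag g ▷ E)) ≫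
    (α_ X B E).inv ≫ (dag f ▷ E)


section Compact

variable [RightRigidCategory C]

/-- Conjugation `f_*` of a morphism, defined as the right adjoint mate of the dagger. -/
def conj' {X Y : C} (f : X ⟶ Y) : Xᘁ ⟶ Yᘁ := (dag f)ᘁ

/-- The cup `𝟙 ⟶ Xᘁ ⊗ X` obtained from the coevaluation and the symmetry. -/
def coevFlip (X : C) : 𝟙_ C ⟶ Xᘁ ⊗ X := η_ X Xᘁ ≫ (β_ X Xᘁ).hom

/-- A doubled cup `𝟙 ⟶ (Bᘁ ⊗ Xᘁ) ⊗ (X ⊗ B)`. -/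
def coev2 (B X : C) : 𝟙_ C ⟶ (Bᘁ ⊗ Xᘁ) ⊗ (X ⊗ B) :=
  (λ_ (𝟙_ C)).inv ≫ (coevFlip B ⊗ₘ coevFlip X) ≫ tensorμ Bᘁ B Xᘁ X ≫
    ((Bᘁ ⊗ Xᘁ) ◁ (β_ B X).hom)

/-- The conjugate `f_* : Aᘁ ⟶ Bᘁ ⊗ Xᘁ` of a Kraus morphism `f : A ⟶ X ⊗ B`,
reversing the order of the tensor factors. -/
def conjKraus {A B X : C} (f : A ⟶ X ⊗ B) : Aᘁ ⟶ Bᘁ ⊗ Xᘁ :=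
  (λ_ Aᘁ).inv ≫ (coev2 B X ▷ Aᘁ) ≫ (α_ (Bᘁ ⊗ Xᘁ) (X ⊗ B) Aᘁ).hom ≫
    ((Bᘁ ⊗ Xᘁ) ◁ (dag f ▷ Aᘁ)) ≫ ((Bᘁ ⊗ Xᘁ) ◁ ((β_ A Aᘁ).hom ≫ ε_ A Aᘁ)) ≫
    (ρ_ (Bᘁ ⊗ Xᘁ)).hom

/-- Selinger's CPM-form `(id ⊗ η† ⊗ id)(f_* ⊗ f) : Aᘁ ⊗ A ⟶ Bᘁ ⊗ B` of a Kraus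
morphism `f : A ⟶ X ⊗ B`. -/
def CPMform {A B X : C} (f : A ⟶ X ⊗ B) : Aᘁ ⊗ A ⟶ Bᘁ ⊗ B :=
  (conjKraus f ⊗ₘ f) ≫ (α_ Bᘁ Xᘁ (X ⊗ B)).hom ≫ (Bᘁ ◁ (α_ Xᘁ X B).inv) ≫
    (Bᘁ ◁ (ε_ X Xᘁ ▷ B)) ≫ (Bᘁ ◁ (λ_ B).hom)

theorem tensor_postcomp {X A' A'' Y B : C} (x : X ⟶ A') (k : A' ⟶ A'') (y : Y ⟶ B) :
    (x ≫ k) ⊗ₘ y = (x ⊗ₘ y) ≫ (k ▷ B) := by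
  rw [← tensorHom_id, tensorHom_comp_tensorHom, Category.comp_id]

/-- In a dagger compact category, for states `f, g : I ⟶ A`, the equality
`(f_* ⊗ f)(f_* ⊗ f)† = (g_* ⊗ g)(g_* ⊗ g)†` of endomorphisms of `Aᘁ ⊗ A` is
equivalent to `(f ⊗ f)(f ⊗ f)† = (g ⊗ g)(g ⊗ g)†`. -/
theorem conj_double_iff_double {A : C} (f g : 𝟙_ C ⟶ A) :
    (dag (conj' f ⊗ₘ f) ≫ (conj' f ⊗ₘ f) = dag (conj' g ⊗ₘ g) ≫ (conj' g ⊗ₘ g)) ↔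
    (dag (f ⊗ₘ f) ≫ (f ⊗ₘ f) = dag (g ⊗ₘ g) ≫ (g ⊗ₘ g)) := by
  letI iu' : HasRightDual (𝟙_ C) := RightRigidCategory.rightDual (𝟙_ C)
  have ef : dag (conj' f ⊗ₘ f) ≫ (conj' f ⊗ₘ f)
      = (dag (conj' f) ≫ conj' f) ⊗ₘ (dag f ≫ f) := by
    rw [DaggerSMC.dag_tensor, tensorHom_comp_tensorHom]
  have eg : dag (conj' g ⊗ₘ g) ≫ (conj' g ⊗ₘ g)
      = (dag (conj' g) ≫ conj' g) ⊗ₘ (dag g ≫ g) := by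
    rw [DaggerSMC.dag_tensor, tensorHom_comp_tensorHom]
  have ef2 : dag (f ⊗ₘ f) ≫ (f ⊗ₘ f) = (dag f ≫ f) ⊗ₘ (dag f ≫ f) := by
    rw [DaggerSMC.dag_tensor, tensorHom_comp_tensorHom]
  have eg2 : dag (g ⊗ₘ g) ≫ (g ⊗ₘ g) = (dag g ≫ g) ⊗ₘ (dag g ≫ g) := by
    rw [DaggerSMC.dag_tensor, tensorHom_comp_tensorHom]
  rw [ef, eg, ef2, eg2]
  have Hq : ∀ (h : 𝟙_ C ⟶ A), (conj' h ▷ A) ≫ ε_ A Aᘁ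
      = (((𝟙_ C)ᘁ) ◁ dag h) ≫ ε_ (𝟙_ C) ((𝟙_ C)ᘁ) := by
    intro h; rw [conj']; exact rightAdjointMate_comp_evaluation (dag h)
  have Hp : ∀ (h : 𝟙_ C ⟶ A), dag (ε_ A Aᘁ) ≫ (dag (conj' h) ▷ A)
      = dag (ε_ (𝟙_ C) ((𝟙_ C)ᘁ)) ≫ (((𝟙_ C)ᘁ) ◁ h) := by
    intro h
    apply dag_inj
    simp only [dag_comp, dag_whiskerRight, dag_whiskerLeft, dag_dag]
    exact Hq h
  have Hq' : ∀ (h : 𝟙_ C ⟶ A), η_ (𝟙_ C) ((𝟙_ C)ᘁ) ≫ ((𝟙_ C) ◁ conj' h)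
      = η_ A Aᘁ ≫ (dag h ▷ Aᘁ) := by
    intro h; rw [conj']; exact coevaluation_comp_rightAdjointMate (dag h)
  have Hp' : ∀ (h : 𝟙_ C ⟶ A), (h ▷ (Aᘁ : C)) ≫ dag (η_ A Aᘁ)
      = ((𝟙_ C) ◁ dag (conj' h)) ≫ dag (η_ (𝟙_ C) ((𝟙_ C)ᘁ)) := by
    intro h
    apply dag_inj
    simp only [dag_comp, dag_whiskerRight, dag_whiskerLeft, dag_dag]
    exact (Hq' h).symm
  haveI : IsIso (dag (ε_ (𝟙_ C) ((𝟙_ C)ᘁ))) := dag_isIso _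
  haveI : IsIso (dag (η_ (𝟙_ C) ((𝟙_ C)ᘁ))) := dag_isIso _
  haveI : IsIso (ThF (C := C)) := by
    rw [ThF, cup1, cap1]; infer_instance
  haveI : IsIso (XiG (C := C)) := by
    rw [XiG, cup2, cap2]; infer_instance
  constructor
  · intro h
    have h2 := congrArg (Fop (A := A)) h
    rw [keyF _ _ _ _ (Hp f) (Hq f), keyF _ _ _ _ (Hp g) (Hq g)] at h2
    have cancel1 : ∀ (x : 𝟙_ C ⟶ A),
        ((dag x ≫ ThF ≫ x) ⊗ₘ (dag x ≫ x)) ≫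
          (((ρ_ A).inv ≫ (A ◁ inv (ThF (C := C))) ≫ (ρ_ A).hom) ▷ A)
        = (dag x ≫ x) ⊗ₘ (dag x ≫ x) := by
      intro x
      have hK : (((ρ_ A).inv ≫ (A ◁ (ThF (C := C))) ≫ (ρ_ A).hom) ≫
          ((ρ_ A).inv ≫ (A ◁ inv (ThF (C := C))) ≫ (ρ_ A).hom)) = 𝟙 A := by
        simp only [Category.assoc, Iso.hom_inv_id_assoc]
        rw [← Category.assoc (A ◁ (ThF (C := C))), ← MonoidalCategory.whiskerLeft_comp]
        simp
      rw [← tensor_postcomp, stateScalar (dag x) ThF x, Category.assoc, hK, Category.comp_id]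
    calc (dag f ≫ f) ⊗ₘ (dag f ≫ f)
        = ((dag f ≫ ThF ≫ f) ⊗ₘ (dag f ≫ f)) ≫
            (((ρ_ A).inv ≫ (A ◁ inv (ThF (C := C))) ≫ (ρ_ A).hom) ▷ A) := (cancel1 f).symm
      _ = ((dag g ≫ ThF ≫ g) ⊗ₘ (dag g ≫ g)) ≫
            (((ρ_ A).inv ≫ (A ◁ inv (ThF (C := C))) ≫ (ρ_ A).hom) ▷ A) := by rw [h2]
      _ = (dag g ≫ g) ⊗ₘ (dag g ≫ g) := cancel1 g
  · intro h
    have h2 := congrArg (Gop (A := A)) h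
    rw [keyG _ _ _ _ (Hq' f) (Hp' f), keyG _ _ _ _ (Hq' g) (Hp' g)] at h2
    have hXi : (XiG (C := C)) = vv ≫ (uu ≫ XiG ≫ vv) ≫ uu := by
      have : vv ≫ (uu ≫ (XiG (C := C)) ≫ vv) ≫ uu
          = (vv ≫ uu) ≫ XiG ≫ (vv ≫ uu) := by simp only [Category.assoc]
      rw [this, vv_uu]
      simp
    haveI : IsIso (uu ≫ (XiG (C := C)) ≫ vv) := by infer_instance
    have cancel2 : ∀ (x : 𝟙_ C ⟶ A),
        ((dag (conj' x) ≫ XiG ≫ conj' x) ⊗ₘ (dag x ≫ x)) ≫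
          (((ρ_ (Aᘁ : C)).inv ≫ ((Aᘁ : C) ◁ inv (uu ≫ (XiG (C := C)) ≫ vv)) ≫
            (ρ_ (Aᘁ : C)).hom) ▷ A)
        = (dag (conj' x) ≫ conj' x) ⊗ₘ (dag x ≫ x) := by
      intro x
      rw [← tensor_postcomp]
      have e1 : dag (conj' x) ≫ (XiG (C := C)) ≫ conj' x
          = (dag (conj' x) ≫ vv) ≫ (uu ≫ XiG ≫ vv) ≫ (uu ≫ conj' x) := by
        conv_lhs => rw [hXi]
        simp only [Category.assoc]
      rw [e1, stateScalar (dag (conj' x) ≫ vv) (uu ≫ XiG ≫ vv) (uu ≫ conj' x)]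
      have e2 : (dag (conj' x) ≫ vv) ≫ uu ≫ conj' x = dag (conj' x) ≫ conj' x := by
        slice_lhs 2 3 => rw [vv_uu]
        simp
      rw [e2]
      have hK : (((ρ_ (Aᘁ : C)).inv ≫ ((Aᘁ : C) ◁ (uu ≫ (XiG (C := C)) ≫ vv)) ≫
            (ρ_ (Aᘁ : C)).hom) ≫
          ((ρ_ (Aᘁ : C)).inv ≫ ((Aᘁ : C) ◁ inv (uu ≫ (XiG (C := C)) ≫ vv)) ≫
            (ρ_ (Aᘁ : C)).hom)) = 𝟙 (Aᘁ : C) := by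
        simp only [Category.assoc, Iso.hom_inv_id_assoc]
        rw [← Category.assoc ((Aᘁ : C) ◁ (uu ≫ (XiG (C := C)) ≫ vv)),
          ← MonoidalCategory.whiskerLeft_comp]
        simp
      rw [Category.assoc, hK, Category.comp_id]
    calc (dag (conj' f) ≫ conj' f) ⊗ₘ (dag f ≫ f)
        = ((dag (conj' f) ≫ XiG ≫ conj' f) ⊗ₘ (dag f ≫ f)) ≫
            (((ρ_ (Aᘁ : C)).inv ≫ ((Aᘁ : C) ◁ inv (uu ≫ (XiG (C := C)) ≫ vv)) ≫
              (ρ_ (Aᘁ : C)).hom) ▷ A) := (cancel2 f).symm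
      _ = ((dag (conj' g) ≫ XiG ≫ conj' g) ⊗ₘ (dag g ≫ g)) ≫
            (((ρ_ (Aᘁ : C)).inv ≫ ((Aᘁ : C) ◁ inv (uu ≫ (XiG (C := C)) ≫ vv)) ≫
              (ρ_ (Aᘁ : C)).hom) ▷ A) := by rw [h2]
      _ = (dag (conj' g) ≫ conj' g) ⊗ₘ (dag g ≫ g) := cancel2 g

end Compact
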